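/- Let ν⃗₁ ∈ ℝ^r have positive entries, W ∈ ℝ^{r×r} be a symmetric nonnegative matrix, and let μ⃗ : [0,∞) → ℝ^r solve μ⃗' = (ν⃗₁ − μ⃗) ⊙ W(ν⃗₁ − μ⃗), μ⃗(0) = 0, where ⊙ is the Hadamard (componentwise) product. Then 0 ≤ μ_k(t) ≤ ν_{1,k} for all k and all t ≥ 0, and each component μ_k is nondecreasing. -/

import Mathlib

open Set intervalIntegral

theorem stmt_15 (r : ℕ) (ν1 : Fin r → ℝ) (hν1 : ∀ k, 0 < ν1 k)
    (W : Matrix (Fin r) (Fin r) ℝ) (hWs : W.IsSymm) (hW0 : ∀ i j, 0 ≤ W i j)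
    (μ : ℝ → Fin r → ℝ) (h0 : μ 0 = 0)
    (hd : ∀ t ≥ (0:ℝ), ∀ k, HasDerivAt (fun s => μ s k)
      ((ν1 k - μ t k) * ∑ j, W k j * (ν1 j - μ t j)) t) :
    (∀ t ≥ (0:ℝ), ∀ k, 0 ≤ μ t k ∧ μ t k ≤ ν1 k) ∧
    (∀ k, MonotoneOn (fun t => μ t k) (Set.Ici 0)) := by
  -- extended coefficient function, continuous everywhere
  set g : Fin r → ℝ → ℝ := fun k s => ∑ j, W k j * (ν1 j - μ (max s 0) j) with hg
  have hμc : ∀ j, Continuous (fun s => μ (max s 0) j) := by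
    intro j
    rw [continuous_iff_continuousAt]
    intro t
    have hm : ContinuousAt (fun s : ℝ => max s 0) t :=
      (continuous_id.max continuous_const).continuousAt
    exact ContinuousAt.comp (g := fun u => μ u j) (f := fun s : ℝ => max s 0)
      ((hd (max t 0) (le_max_right _ _) j).continuousAt) hm
  have hgc : ∀ k, Continuous (g k) := fun k =>
    continuous_finset_sum _ fun j _ => continuous_const.mul (continuous_const.sub (hμc j))
  -- primitive
  set G : Fin r → ℝ → ℝ := fun k t => ∫ s in (0:ℝ)..t, g k s with hG
  have hGd : ∀ k t, HasDerivAt (G k) (g k t) t := by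
    intro k t
    exact integral_hasDerivAt_right ((hgc k).intervalIntegrable _ _)
      ((hgc k).stronglyMeasurable.stronglyMeasurableAtFilter) (hgc k).continuousAt
  -- the key positivity: ν1 k - μ t k > 0 for t ≥ 0
  have key : ∀ t ≥ (0:ℝ), ∀ k, 0 < ν1 k - μ t k := by
    intro t ht k
    set F : ℝ → ℝ := fun s => (ν1 k - μ s k) * Real.exp (G k s) with hF
    have hFd : ∀ s ≥ (0:ℝ), HasDerivAt F 0 s := by
      intro s hs
      have h1 := (hasDerivAt_const s (ν1 k)).sub (hd s hs k)
      have h2 : HasDerivAt (fun u => Real.exp (G k u)) (g k s * Real.exp (G k s)) s := by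
        simpa [mul_comm] using (hGd k s).exp
      have h3 := h1.mul h2
      have hgs : g k s = ∑ j, W k j * (ν1 j - μ s j) := by
        simp [hg, max_eq_left hs]
      convert h3 using 1
      case e'_4 => rfl
      case e'_5 => rfl
      case e'_8 => rfl
      rw [hgs]; simp only [Pi.sub_apply]; ring
    have hcst := constant_of_has_deriv_right_zero (a := 0) (b := t)
      (f := F) (fun x hx => ((hFd x hx.1).continuousAt).continuousWithinAt)
      (fun x hx => ((hFd x hx.1).hasDerivWithinAt))
    have hFt : F t = F 0 := hcst t ⟨ht, le_refl t⟩
    have hF0 : F 0 = ν1 k := by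
      simp [hF, h0, hG]
    have hexp := Real.exp_pos (G k t)
    have h5 : (ν1 k - μ t k) * Real.exp (G k t) = ν1 k := hFt.trans hF0
    nlinarith [hν1 k]
  -- derivative nonneg
  have hderiv_nonneg : ∀ t ≥ (0:ℝ), ∀ k,
      0 ≤ (ν1 k - μ t k) * ∑ j, W k j * (ν1 j - μ t j) := by
    intro t ht k
    apply mul_nonneg (key t ht k).le
    exact Finset.sum_nonneg fun j _ => mul_nonneg (hW0 k j) (key t ht j).le
  have hmono : ∀ k, MonotoneOn (fun t => μ t k) (Set.Ici 0) := by
    intro k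
    apply monotoneOn_of_deriv_nonneg (convex_Ici 0)
    · exact fun x hx => ((hd x hx k).continuousAt).continuousWithinAt
    · intro x hx
      rw [interior_Ici] at hx
      exact ((hd x hx.le k).differentiableAt).differentiableWithinAt
    · intro x hx
      rw [interior_Ici] at hx
      rw [(hd x hx.le k).deriv]
      exact hderiv_nonneg x hx.le k
  refine ⟨fun t ht k => ⟨?_, (sub_pos.mp (key t ht k)).le⟩, hmono⟩
  have := hmono k (self_mem_Ici) ht ht
  simpa [h0] using this
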